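/- Let μ be the real Gaussian probability measure with mean m > 0 and standard deviation s > 0, and set β = m/s. Then the unique b > 0 solving F(b) = E_f*, where E_f* = (∫_{(−∞,0)} (−x) dμ(x)) / (s·μ((−∞,0))) is the normalized expected failure deficit of μ, is b = β; that is, the severity-aware reliability index coincides with the classical reliability index β = m/s in the Gaussian case. -/

import Mathlib

open MeasureTheory Filter

/-- Standard normal density. -/
noncomputable def phi (x : ℝ) : ℝ := Real.exp (-x ^ 2 / 2) / Real.sqrt (2 * Real.pi)

/-- Standard normal cumulative distribution function. -/
noncomputable def Phi (x : ℝ) : ℝ := ∫ t in Set.Iio x, phi t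

/-- Mills-type ratio. -/
noncomputable def r (b : ℝ) : ℝ := phi b / Phi (-b)

/-- The deficit transformation `F`. -/
noncomputable def F (b : ℝ) : ℝ := phi b / Phi (-b) - b


lemma sqrt_two_pi_pos : 0 < Real.sqrt (2 * Real.pi) :=
  Real.sqrt_pos.2 (by positivity)

lemma phi_pos (x : ℝ) : 0 < phi x := div_pos (Real.exp_pos _) sqrt_two_pi_pos

lemma phi_nonneg (x : ℝ) : 0 ≤ phi x := (phi_pos x).le

lemma continuous_phi : Continuous phi := by
  unfold phi
  fun_prop

lemma phi_neg (x : ℝ) : phi (-x) = phi x := by simp [phi]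

lemma phi_eq_pdf : phi = ProbabilityTheory.gaussianPDFReal 0 1 := by
  funext x
  simp only [ProbabilityTheory.gaussianPDFReal, phi, NNReal.coe_one, mul_one, sub_zero]
  rw [div_eq_inv_mul]

lemma integrable_phi : Integrable phi := by
  rw [phi_eq_pdf]; exact ProbabilityTheory.integrable_gaussianPDFReal 0 1

lemma integrable_id_mul_phi : Integrable (fun t : ℝ => t * phi t) := by
  have h : (fun t : ℝ => t * phi t)
      = fun t : ℝ => (Real.sqrt (2 * Real.pi))⁻¹ * (t * Real.exp (-(1/2) * t ^ 2)) := by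
    funext t
    simp only [phi]
    field_simp
  rw [h]
  exact ((integrable_mul_exp_neg_mul_sq (by norm_num : (0:ℝ) < 1/2)).const_mul _)

lemma hasDerivAt_phi (x : ℝ) : HasDerivAt phi (-x * phi x) x := by
  have h1 : HasDerivAt (fun t : ℝ => -t ^ 2 / 2) (-x) x := by
    have := ((hasDerivAt_pow 2 x).neg).div_const 2
    simpa using this.congr_deriv (by ring)
  have h2 : HasDerivAt phi _ x := (h1.exp).div_const (Real.sqrt (2 * Real.pi))
  convert h2 using 1
  simp [phi]
  ring

lemma tendsto_phi_aux {l : Filter ℝ} (h2 : Tendsto (fun x : ℝ => x ^ 2) l atTop) :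
    Tendsto phi l (nhds 0) := by
  have h1 : Tendsto (fun x : ℝ => -x ^ 2 / 2) l atBot :=
    (tendsto_neg_atTop_atBot.comp h2).atBot_div_const (by norm_num)
  have h3 : Tendsto (fun x : ℝ => Real.exp (-x ^ 2 / 2)) l (nhds 0) :=
    Real.tendsto_exp_atBot.comp h1
  have h4 := h3.div_const (Real.sqrt (2 * Real.pi))
  rw [zero_div] at h4
  exact h4

lemma tendsto_phi_atTop : Tendsto phi atTop (nhds 0) :=
  tendsto_phi_aux (tendsto_pow_atTop two_ne_zero)

lemma tendsto_phi_atBot : Tendsto phi atBot (nhds 0) :=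
  tendsto_phi_aux (by
    have h : Tendsto ((fun x : ℝ => x ^ 2) ∘ fun x : ℝ => -x) atBot atTop :=
      (tendsto_pow_atTop two_ne_zero).comp tendsto_neg_atBot_atTop
    have he : (fun x : ℝ => x ^ 2) = (fun x : ℝ => x ^ 2) ∘ fun x : ℝ => -x := by
      funext x; simp [Function.comp]
    rw [he]; exact h)

lemma Phi_eq_Iic (x : ℝ) : Phi x = ∫ t in Set.Iic x, phi t :=
  (MeasureTheory.integral_Iic_eq_integral_Iio).symm

lemma integral_Iio_id_mul_phi (c : ℝ) : ∫ t in Set.Iio c, t * phi t = -phi c := by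
  rw [← MeasureTheory.integral_Iic_eq_integral_Iio]
  have h := MeasureTheory.integral_Iic_of_hasDerivAt_of_tendsto'
    (f := fun t => -phi t) (f' := fun t => t * phi t) (a := c) (m := 0)
    (fun x _ => by exact (hasDerivAt_phi x).neg.congr_deriv (by ring))
    integrable_id_mul_phi.integrableOn
    (by simpa using tendsto_phi_atBot.neg)
  simpa using h

lemma Phi_pos (x : ℝ) : 0 < Phi x := by
  unfold Phi
  rw [MeasureTheory.setIntegral_pos_iff_support_of_nonneg_ae
    (ae_of_all _ fun t => phi_nonneg t) integrable_phi.integrableOn]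
  have : Function.support phi = Set.univ := by
    ext t; simp [Function.support, (phi_pos t).ne']
  rw [this, Set.univ_inter]
  simp [Real.volume_Iio]

lemma hasDerivAt_Phi (x : ℝ) : HasDerivAt Phi (phi x) x := by
  have hrepr : Phi = fun u => (∫ t in Set.Iic (0:ℝ), phi t) + ∫ t in (0:ℝ)..u, phi t := by
    funext u
    rw [Phi_eq_Iic, ← intervalIntegral.integral_Iic_sub_Iic
      integrable_phi.integrableOn integrable_phi.integrableOn]
    ring
  rw [hrepr]
  exact ((intervalIntegral.integral_hasDerivAt_right
    integrable_phi.intervalIntegrable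
    (continuous_phi.stronglyMeasurableAtFilter _ _)
    continuous_phi.continuousAt)).const_add _

lemma hasDerivAt_Phi_neg (x : ℝ) : HasDerivAt (fun b => Phi (-b)) (-phi x) x := by
  have h := (hasDerivAt_Phi (-x)).comp x (hasDerivAt_neg x)
  simp only [phi_neg, mul_neg, mul_one] at h
  exact h

lemma Phi_neg_le (b : ℝ) (hb : 0 < b) : Phi (-b) ≤ phi b / b := by
  have h1 : ∫ t in Set.Iio (-b), phi t ≤ ∫ t in Set.Iio (-b), (-t / b) * phi t := by
    apply MeasureTheory.setIntegral_mono_on integrable_phi.integrableOn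
    · exact (integrable_id_mul_phi.div_const b).neg.congr (by
        filter_upwards with t
        simp; ring) |>.integrableOn
    · exact measurableSet_Iio
    · intro t ht
      have : 1 ≤ -t / b := by
        rw [le_div_iff₀ hb]
        simp only [Set.mem_Iio] at ht
        linarith
      nlinarith [phi_pos t]
  have h2 : ∫ t in Set.Iio (-b), (-t / b) * phi t = phi b / b := by
    have : ∀ t : ℝ, (-t / b) * phi t = (-1/b) * (t * phi t) := by intro t; ring
    simp_rw [this]
    rw [MeasureTheory.integral_const_mul, integral_Iio_id_mul_phi, phi_neg]
    ring
  calc Phi (-b) ≤ _ := h1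
    _ = _ := h2

/-- auxiliary function for the Komatu bound -/
noncomputable def uu (b : ℝ) : ℝ := (Real.sqrt (b ^ 2 + 4) - b) / 2

lemma sqrt_sq_add_four_pos (b : ℝ) : 0 < Real.sqrt (b ^ 2 + 4) :=
  Real.sqrt_pos.2 (by positivity)

lemma sq_sqrt_sq_add_four (b : ℝ) : Real.sqrt (b ^ 2 + 4) ^ 2 = b ^ 2 + 4 :=
  Real.sq_sqrt (by positivity)

lemma sqrt_gt (b : ℝ) : b < Real.sqrt (b ^ 2 + 4) := by
  rcases le_or_gt b 0 with h | h
  · exact lt_of_le_of_lt h (sqrt_sq_add_four_pos b)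
  · nlinarith [sq_sqrt_sq_add_four b, sqrt_sq_add_four_pos b]

lemma uu_pos (b : ℝ) : 0 < uu b := by
  unfold uu; linarith [sqrt_gt b]

lemma uu_mul (b : ℝ) : uu b * ((Real.sqrt (b ^ 2 + 4) + b) / 2) = 1 := by
  unfold uu
  nlinarith [sq_sqrt_sq_add_four b]

lemma hasDerivAt_uu (b : ℝ) :
    HasDerivAt uu ((b / Real.sqrt (b ^ 2 + 4) - 1) / 2) b := by
  have h1 : HasDerivAt (fun x : ℝ => x ^ 2 + 4) (2 * b) b := by
    simpa using ((hasDerivAt_pow 2 b).add_const 4)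
  have h2 : HasDerivAt (fun x : ℝ => Real.sqrt (x ^ 2 + 4))
      (2 * b / (2 * Real.sqrt (b ^ 2 + 4))) b :=
    (Real.hasDerivAt_sqrt (by positivity)).comp b h1 |>.congr_deriv (by ring)
  have h3 := (h2.sub (hasDerivAt_id b)).div_const 2
  apply h3.congr_deriv
  have hs := (sqrt_sq_add_four_pos b).ne'
  field_simp

noncomputable def G (b : ℝ) : ℝ := Phi (-b) - phi b * uu b

lemma hasDerivAt_G (b : ℝ) :
    HasDerivAt G (-phi b * (1 + (b / Real.sqrt (b ^ 2 + 4) - 1) / 2 - b * uu b)) b := by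
  have h := (hasDerivAt_Phi_neg b).sub (((hasDerivAt_phi b).mul (hasDerivAt_uu b)))
  apply h.congr_deriv
  ring

lemma G_deriv_neg (b : ℝ) :
    -phi b * (1 + (b / Real.sqrt (b ^ 2 + 4) - 1) / 2 - b * uu b) < 0 := by
  have hs := sqrt_sq_add_four_pos b
  have hsq := sq_sqrt_sq_add_four b
  have hb' : b / Real.sqrt (b ^ 2 + 4) * Real.sqrt (b ^ 2 + 4) = b :=
    div_mul_cancel₀ b hs.ne'
  have h1 : b * (b ^ 2 + 3) < (1 + b ^ 2) * Real.sqrt (b ^ 2 + 4) := by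
    rcases le_or_gt b 0 with h | h
    · nlinarith
    · have hsq2 : ((1 + b ^ 2) * Real.sqrt (b ^ 2 + 4)) ^ 2 = (b * (b ^ 2 + 3)) ^ 2 + 4 := by
        linear_combination (1 + b ^ 2) ^ 2 * hsq
      nlinarith [hsq2, mul_pos (show (0:ℝ) < 1 + b ^ 2 by positivity) hs,
        mul_pos h (show (0:ℝ) < b ^ 2 + 3 by positivity)]
  have hkey : 0 < 1 + (b / Real.sqrt (b ^ 2 + 4) - 1) / 2 - b * uu b := by
    unfold uu
    have hX : (1 + (b / Real.sqrt (b ^ 2 + 4) - 1) / 2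
          - b * ((Real.sqrt (b ^ 2 + 4) - b) / 2)) * (2 * Real.sqrt (b ^ 2 + 4))
        = (1 + b ^ 2) * Real.sqrt (b ^ 2 + 4) - b * (b ^ 2 + 3) := by
      linear_combination hb' - b * hsq
    nlinarith [hX, h1, hs]
  nlinarith [phi_pos b]

lemma G_strictAnti : StrictAnti G := by
  have : ∀ x : ℝ, deriv G x < 0 := fun x => by
    rw [(hasDerivAt_G x).deriv]; exact G_deriv_neg x
  exact strictAnti_of_deriv_neg this

lemma tendsto_G_atTop : Tendsto G atTop (nhds 0) := by
  have h1 : Tendsto (fun b => Phi (-b)) atTop (nhds 0) := by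
    apply squeeze_zero' (g := fun b => phi b / b)
    · filter_upwards with b; exact (Phi_pos (-b)).le
    · filter_upwards [eventually_gt_atTop 0] with b hb; exact Phi_neg_le b hb
    · have := tendsto_phi_atTop.div_atTop tendsto_id
      simpa using this
  have h2 : Tendsto (fun b => phi b * uu b) atTop (nhds 0) := by
    apply squeeze_zero' (g := fun b => phi b / b)
    · filter_upwards with b
      exact (mul_pos (phi_pos b) (uu_pos b)).le
    · filter_upwards [eventually_gt_atTop 0] with b hb
      have hsq3 : (b * Real.sqrt (b ^ 2 + 4)) ^ 2 = b ^ 2 * (b ^ 2 + 4) := by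
        linear_combination b ^ 2 * sq_sqrt_sq_add_four b
      have hbs : b * Real.sqrt (b ^ 2 + 4) ≤ b ^ 2 + 2 := by nlinarith [hsq3]
      have hu : uu b ≤ 1 / b := by
        unfold uu
        rw [div_le_div_iff₀ (by norm_num) hb]
        nlinarith [hbs]
      calc phi b * uu b ≤ phi b * (1 / b) :=
            mul_le_mul_of_nonneg_left hu (phi_nonneg b)
        _ = phi b / b := by ring
    · have := tendsto_phi_atTop.div_atTop tendsto_id
      simpa using this
  have := h1.sub h2
  rw [sub_zero] at this
  exact this

lemma G_pos (b : ℝ) : 0 < G b := by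
  have h1 : 0 ≤ G (b + 1) := by
    apply le_of_tendsto tendsto_G_atTop
    filter_upwards [eventually_ge_atTop (b + 1)] with y hy
    rcases eq_or_lt_of_le hy with h | h
    · rw [h]
    · exact (G_strictAnti h).le
  have h2 : G (b + 1) < G b := G_strictAnti (by linarith)
  linarith

/-- Komatu-type bound: `phi b / Phi (-b) < (b + sqrt (b^2+4))/2`. -/
lemma mills_lt (b : ℝ) : phi b / Phi (-b) < (b + Real.sqrt (b ^ 2 + 4)) / 2 := by
  have hG := G_pos b
  have hP := Phi_pos (-b)
  have hu := uu_pos b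
  have h : phi b * uu b < Phi (-b) := by unfold G at hG; linarith
  rw [div_lt_iff₀ hP]
  have huinv : (b + Real.sqrt (b ^ 2 + 4)) / 2 = 1 / uu b := by
    rw [eq_div_iff hu.ne']
    have := uu_mul b
    linarith [uu_mul b]
  rw [huinv, one_div, inv_mul_eq_div, lt_div_iff₀ hu]
  exact h

lemma hasDerivAt_F (b : ℝ) :
    HasDerivAt F ((phi b / Phi (-b)) * (phi b / Phi (-b) - b) - 1) b := by
  have hP := Phi_pos (-b)
  have hdiv := ((hasDerivAt_phi b).div (hasDerivAt_Phi_neg b) hP.ne')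
  have h := hdiv.sub (hasDerivAt_id b)
  apply h.congr_deriv
  field_simp
  ring

lemma F_deriv_neg (b : ℝ) :
    (phi b / Phi (-b)) * (phi b / Phi (-b) - b) - 1 < 0 := by
  set R := phi b / Phi (-b) with hR
  have hRpos : 0 < R := div_pos (phi_pos b) (Phi_pos (-b))
  have hlt : R < (b + Real.sqrt (b ^ 2 + 4)) / 2 := mills_lt b
  have hs := sqrt_sq_add_four_pos b
  have hsq := sq_sqrt_sq_add_four b
  rcases le_or_gt R b with h | h
  · nlinarith
  · nlinarith [hlt, hsq, hs, h, hRpos]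

lemma F_strictAnti : StrictAnti F :=
  strictAnti_of_deriv_neg fun x => by
    rw [(hasDerivAt_F x).deriv]; exact F_deriv_neg x

lemma gauss01_eq : ProbabilityTheory.gaussianReal 0 1
    = MeasureTheory.volume.withDensity (fun x => ((phi x).toNNReal : ENNReal)) := by
  rw [ProbabilityTheory.gaussianReal_of_var_ne_zero 0 one_ne_zero]
  congr 1
  funext x
  rw [ProbabilityTheory.gaussianPDF, ← phi_eq_pdf]
  rfl

lemma gauss01_setIntegral (c : ℝ) (g : ℝ → ℝ) :
    ∫ t in Set.Iio c, g t ∂(ProbabilityTheory.gaussianReal 0 1)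
      = ∫ t in Set.Iio c, phi t * g t := by
  rw [gauss01_eq,
    setIntegral_withDensity_eq_setIntegral_smul
      (continuous_phi.measurable.real_toNNReal) g measurableSet_Iio]
  apply MeasureTheory.setIntegral_congr_fun measurableSet_Iio
  intro t _
  simp [NNReal.smul_def, Real.coe_toNNReal _ (phi_nonneg t)]

lemma gauss01_Iio (c : ℝ) :
    ((ProbabilityTheory.gaussianReal 0 1) (Set.Iio c)).toReal = Phi c := by
  rw [ProbabilityTheory.gaussianReal_apply_eq_integral 0 one_ne_zero, ← phi_eq_pdf]
  exact ENNReal.toReal_ofReal (Phi_pos c).le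

/-- In the Gaussian case with mean `m > 0` and standard deviation `s > 0`, the unique
`b > 0` solving `F(b) = E_f*` (the normalized expected failure deficit of the Gaussian
measure) is the classical reliability index `b = m/s`. -/
theorem gaussian_severity_index_eq_classical (m s : ℝ) (hm : 0 < m) (hs : 0 < s) :
    0 < m / s ∧
      F (m / s)
        = (∫ x in Set.Iio (0 : ℝ), -x ∂(ProbabilityTheory.gaussianReal m ⟨s ^ 2, sq_nonneg s⟩)) /
            (s * ((ProbabilityTheory.gaussianReal m ⟨s ^ 2, sq_nonneg s⟩) (Set.Iio 0)).toReal) ∧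
      ∀ b : ℝ, 0 < b →
        F b
          = (∫ x in Set.Iio (0 : ℝ), -x ∂(ProbabilityTheory.gaussianReal m ⟨s ^ 2, sq_nonneg s⟩)) /
              (s * ((ProbabilityTheory.gaussianReal m ⟨s ^ 2, sq_nonneg s⟩) (Set.Iio 0)).toReal) →
        b = m / s := by
  have hβ : 0 < m / s := div_pos hm hs
  set v : NNReal := (⟨s ^ 2, sq_nonneg s⟩ : NNReal) with hv
  have hmap : ProbabilityTheory.gaussianReal m v
      = Measure.map (fun t => s * t + m) (ProbabilityTheory.gaussianReal 0 1) := by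
    have h1 : Measure.map (fun t : ℝ => s * t) (ProbabilityTheory.gaussianReal 0 1)
        = ProbabilityTheory.gaussianReal 0 v := by
      have h := ProbabilityTheory.gaussianReal_map_const_mul (μ := 0) (v := 1) s
      convert h using 2 <;> simp
      congr 1
    have h2 := ProbabilityTheory.gaussianReal_map_add_const (μ := 0) (v := v) m
    rw [zero_add] at h2
    rw [← h2, ← h1, Measure.map_map (measurable_id'.add_const m) (measurable_id'.const_mul s)]
    congr 1
  have hpre : (fun t => s * t + m) ⁻¹' (Set.Iio 0) = Set.Iio (-(m / s)) := by
    ext t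
    simp only [Set.mem_preimage, Set.mem_Iio]
    rw [show -(m / s) = -m / s by ring, lt_div_iff₀ hs]
    constructor <;> intro h <;> nlinarith
  have hgmeas : Measurable (fun t : ℝ => s * t + m) :=
    (measurable_id.const_mul s).add_const m
  have hP : ((ProbabilityTheory.gaussianReal m v) (Set.Iio 0)).toReal = Phi (-(m / s)) := by
    rw [hmap, Measure.map_apply hgmeas measurableSet_Iio, hpre, gauss01_Iio]
  have hNum : (∫ x in Set.Iio (0 : ℝ), -x ∂(ProbabilityTheory.gaussianReal m v))
      = s * phi (m / s) - m * Phi (-(m / s)) := by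
    rw [hmap, MeasureTheory.setIntegral_map measurableSet_Iio
      (continuous_neg.aestronglyMeasurable) hgmeas.aemeasurable, hpre,
      gauss01_setIntegral]
    have hcongr : ∀ t : ℝ, phi t * -(s * t + m) = (-s) * (t * phi t) + (-m) * phi t := by
      intro t; ring
    simp_rw [hcongr]
    rw [MeasureTheory.integral_add
        ((integrable_id_mul_phi.const_mul (-s)).integrableOn)
        ((integrable_phi.const_mul (-m)).integrableOn),
      MeasureTheory.integral_const_mul, MeasureTheory.integral_const_mul,
      integral_Iio_id_mul_phi, phi_neg]
    show -s * -phi (m / s) + -m * Phi (-(m / s)) = _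
    ring
  have hPpos := Phi_pos (-(m / s))
  have hF : F (m / s)
      = (∫ x in Set.Iio (0 : ℝ), -x ∂(ProbabilityTheory.gaussianReal m v)) /
          (s * ((ProbabilityTheory.gaussianReal m v) (Set.Iio 0)).toReal) := by
    rw [hNum, hP]
    unfold F
    rw [div_sub' hPpos.ne', div_eq_div_iff hPpos.ne' (by positivity : s * Phi (-(m / s)) ≠ 0)]
    field_simp
  exact ⟨hβ, hF, fun b _ hFb => F_strictAnti.injective (hFb.trans hF.symm)⟩
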